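/- For positive integers p, q, r, s and distinct positive integers M, N, we have (2^M - 1)^p (2^M + 1)^q ≠ (2^N - 1)^r (2^N + 1)^s. -/

import Mathlib

lemma aux_dvd_iff (ℓ : ℕ) (k : ℕ) : ℓ ∣ 2 ^ k - 1 ↔ (2 : ZMod ℓ) ^ k = 1 := by
  have h1 : 1 ≤ 2 ^ k := Nat.one_le_two_pow
  rw [← Nat.modEq_iff_dvd' h1, Nat.ModEq.comm, ← ZMod.natCast_eq_natCast_iff]
  push_cast
  rfl

lemma prod_id (N : ℕ) : (2 ^ N - 1) * (2 ^ N + 1) = 2 ^ (2 * N) - 1 := by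
  have h1 : 1 ≤ 2 ^ N := Nat.one_le_two_pow
  have h2 : 2 ^ (2 * N) = 2 ^ N * 2 ^ N := by rw [two_mul, pow_add]
  cases' Nat.exists_eq_add_of_le h1 with y hy
  have hy' : 2 ^ N = y + 1 := by omega
  rw [h2, hy']
  have : (y + 1) * (y + 1) = (y + 1 - 1) * (y + 1 + 1) + 1 := by simp; ring
  omega

lemma key (p q r s M N : ℕ) (hp : 0 < p) (hq : 0 < q) (hr : 0 < r) (hs : 0 < s)
    (hM : 0 < M) (hMN : M < N)
    (h : (2 ^ M - 1) ^ p * (2 ^ M + 1) ^ q = (2 ^ N - 1) ^ r * (2 ^ N + 1) ^ s) : False := by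
  set g := Nat.gcd M N with hgdef
  have hgM : g ∣ M := Nat.gcd_dvd_left M N
  have hgN : g ∣ N := Nat.gcd_dvd_right M N
  have hg0 : 0 < g := Nat.gcd_pos_of_pos_left _ hM
  have hgleM : g ≤ M := Nat.le_of_dvd hM hgM
  set t := N / g with htdef
  have ht : g * t = N := Nat.mul_div_cancel' hgN
  have ht2 : 2 ≤ t := by
    rcases Nat.lt_or_ge t 2 with h' | h'
    · interval_cases t <;> omega
    · exact h'
  have h2g : 2 * g ≤ N := by
    have := Nat.mul_le_mul_left g ht2
    omega
  have ht0 : t ≠ 0 := by omega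
  set A := 2 ^ (2 * N) - 1 with hAdef
  set B := 2 ^ (2 * g) - 1 with hBdef
  have hA0 : 0 < A := by
    have : (2:ℕ) ^ 1 ≤ 2 ^ (2 * N) := Nat.pow_le_pow_right (by norm_num) (by omega)
    simp at this; omega
  have hB0 : 0 < B := by
    have : (2:ℕ) ^ 1 ≤ 2 ^ (2 * g) := Nat.pow_le_pow_right (by norm_num) (by omega)
    simp at this; omega
  have hAodd : ¬ 2 ∣ A := by
    have h2d : 2 ∣ 2 ^ (2 * N) := dvd_pow_self 2 (by omega)
    have : 1 ≤ 2 ^ (2 * N) := Nat.one_le_two_pow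
    omega
  -- Step 1: every prime of A divides B
  have hstep : ∀ ℓ : ℕ, ℓ.Prime → ℓ ∣ A → ℓ ∣ B := by
    intro ℓ hℓ hℓA
    have hℓ2 : ℓ ≠ 2 := by rintro rfl; exact hAodd hℓA
    have h1 : ℓ ∣ (2 ^ N - 1) * (2 ^ N + 1) := by rw [prod_id]; exact hℓA
    have h2 : ℓ ∣ (2 ^ N - 1) ^ r * (2 ^ N + 1) ^ s := by
      rcases (Nat.Prime.dvd_mul hℓ).mp h1 with h' | h'
      · exact Dvd.dvd.mul_right (h'.trans (dvd_pow_self _ hr.ne')) _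
      · exact Dvd.dvd.mul_left (h'.trans (dvd_pow_self _ hs.ne')) _
    rw [← h] at h2
    have h3 : ℓ ∣ 2 ^ (2 * M) - 1 := by
      rcases (Nat.Prime.dvd_mul hℓ).mp h2 with h' | h'
      · have h'' := hℓ.dvd_of_dvd_pow h'
        exact h''.trans (prod_id M ▸ dvd_mul_right _ _)
      · have h'' := hℓ.dvd_of_dvd_pow h'
        exact h''.trans (prod_id M ▸ dvd_mul_left _ _)
    have hM' := (aux_dvd_iff ℓ (2 * M)).mp h3
    have hN' := (aux_dvd_iff ℓ (2 * N)).mp hℓA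
    have hdg : orderOf (2 : ZMod ℓ) ∣ 2 * g := by
      have := Nat.dvd_gcd (orderOf_dvd_of_pow_eq_one hM') (orderOf_dvd_of_pow_eq_one hN')
      rwa [Nat.gcd_mul_left] at this
    exact (aux_dvd_iff ℓ (2 * g)).mpr (orderOf_dvd_iff_pow_eq_one.mp hdg)
  -- Step 2: A ∣ B * t
  have hBt0 : B * t ≠ 0 := by positivity
  have hdvd : A ∣ B * t := by
    rw [← Nat.factorization_le_iff_dvd hA0.ne' hBt0, Finsupp.le_def]
    intro ℓ
    by_cases hℓ : ℓ.Prime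
    · by_cases hℓA : ℓ ∣ A
      · have hℓB := hstep ℓ hℓ hℓA
        have hℓ2 : ℓ ≠ 2 := by rintro rfl; exact hAodd hℓA
        haveI : Fact ℓ.Prime := ⟨hℓ⟩
        have hodd : Odd ℓ := hℓ.odd_of_ne_two hℓ2
        have hyx : (1:ℕ) < 2 ^ (2 * g) := Nat.one_lt_two_pow_iff.mpr (by omega)
        have hx : ¬ ℓ ∣ 2 ^ (2 * g) := by
          intro hcon
          have h2' := hℓ.dvd_of_dvd_pow hcon
          exact hℓ2 ((Nat.prime_dvd_prime_iff_eq hℓ Nat.prime_two).mp h2')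
        have hlte := padicValNat.pow_sub_pow hodd hyx (by simpa using hℓB) hx ht0
        have hpow : (2 ^ (2 * g)) ^ t = 2 ^ (2 * N) := by
          rw [← pow_mul, mul_assoc, ht]
        rw [one_pow, hpow] at hlte
        rw [Nat.factorization_def _ hℓ, Nat.factorization_mul hB0.ne' ht0]
        simp only [Finsupp.coe_add, Pi.add_apply, Nat.factorization_def _ hℓ]
        rw [hAdef, hlte, hBdef]
      · rw [Nat.factorization_eq_zero_of_not_dvd hℓA]; exact Nat.zero_le _
    · simp [Nat.factorization_eq_zero_of_not_prime _ hℓ]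
  -- Step 3: size contradiction
  have hle : A ≤ B * t := Nat.le_of_dvd (by positivity) hdvd
  have hBle : B ≤ 2 ^ N - 1 := by
    have : (2:ℕ) ^ (2 * g) ≤ 2 ^ N := Nat.pow_le_pow_right (by norm_num) h2g
    omega
  have htle : t ≤ N := Nat.le_of_dvd (by omega) (Dvd.intro_left g ht)
  have hfin : B * t ≤ (2 ^ N - 1) * N := Nat.mul_le_mul hBle htle
  have hlt : (2 ^ N - 1) * N < A := by
    rw [hAdef, ← prod_id]
    have hpos : 0 < 2 ^ N - 1 := by
      have : (1:ℕ) < 2 ^ N := Nat.one_lt_two_pow_iff.mpr (by omega)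
      omega
    exact Nat.mul_lt_mul_of_le_of_lt (le_refl _) (by have := @Nat.lt_two_pow_self N; omega) hpos
  omega

theorem stmt12 (p q r s M N : ℕ) (hp : 0 < p) (hq : 0 < q) (hr : 0 < r) (hs : 0 < s)
    (hM : 0 < M) (hN : 0 < N) (hMN : M ≠ N) :
    (2 ^ M - 1) ^ p * (2 ^ M + 1) ^ q ≠ (2 ^ N - 1) ^ r * (2 ^ N + 1) ^ s := by
  intro h
  rcases hMN.lt_or_gt with h' | h'
  · exact key p q r s M N hp hq hr hs hM h' h
  · exact key r s p q N M hr hs hp hq hN h' h.symm
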